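/- arXiv:1201.2674 — 9 statements merged into one kernel-verified Lean document; each statement's English description precedes it below -/
import Mathlib

section
/- Let g be a Lie algebra over a field of characteristic zero whose bracket also satisfies the pre-Lie identity [[x,y],z] − [x,[y,z]] = [[x,z],y] − [x,[z,y]] for all x,y,z. Then g is two-step nilpotent, i.e., [[y,z],x] = 0 for all x,y,z. -/
/-- A Lie algebra whose bracket also satisfies the pre-Lie identity is
two-step nilpotent. -/
theorem preLie_bracket_implies_two_step_nilpotent
    {K L : Type*} [Field K] [CharZero K] [LieRing L] [LieAlgebra K L]
    (hpre : ∀ x y z : L, ⁅⁅x, y⁆, z⁆ - ⁅x, ⁅y, z⁆⁆ = ⁅⁅x, z⁆, y⁆ - ⁅x, ⁅z, y⁆⁆) :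
    ∀ x y z : L, ⁅⁅y, z⁆, x⁆ = 0 := by
  have h : ∀ a b c : L, ⁅b, ⁅a, c⁆⁆ = ⁅c, ⁅a, b⁆⁆ := by
    intro a b c
    have H := hpre a b c
    rw [lie_lie, lie_lie] at H
    linear_combination (norm := abel) -H
  have key : ∀ x y z : L, ⁅x, ⁅y, z⁆⁆ = 0 := by
    intro x y z
    have j := lie_jacobi x y z
    have h1 : ⁅y, ⁅z, x⁆⁆ = -⁅y, ⁅x, z⁆⁆ := by rw [← lie_skew z x, lie_neg]
    have h2 : ⁅y, ⁅x, z⁆⁆ = ⁅z, ⁅x, y⁆⁆ := h x y z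
    linear_combination (norm := abel) j - h1 + h2
  intro x y z
  rw [← lie_skew, key, neg_zero]
end

section
/- Let g be a Lie algebra over a field of characteristic zero whose bracket satisfies the G4-associativity identity [[x,y],z] − [x,[y,z]] = [[z,y],x] − [z,[y,x]] for all x,y,z. Then g is two-step nilpotent. -/
/-- A Lie algebra whose bracket satisfies the G4-associativity identity is
two-step nilpotent. -/
theorem g4_bracket_implies_two_step_nilpotent
    {K L : Type*} [Field K] [CharZero K] [LieRing L] [LieAlgebra K L]
    (hG4 : ∀ x y z : L, ⁅⁅x, y⁆, z⁆ - ⁅x, ⁅y, z⁆⁆ = ⁅⁅z, y⁆, x⁆ - ⁅z, ⁅y, x⁆⁆) :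
    ∀ x y z : L, ⁅⁅x, y⁆, z⁆ = 0 := by
  have key : ∀ x y z : L, ⁅y, ⁅x, z⁆⁆ = 0 := by
    intro x y z
    have h := hG4 x y z
    rw [lie_lie, lie_lie] at h
    have hzx : (⁅z, x⁆ : L) = -⁅x, z⁆ := (neg_eq_iff_eq_neg.mp (lie_skew x z)).symm ▸ rfl
    have hs : ⁅y, ⁅z, x⁆⁆ = -⁅y, ⁅x, z⁆⁆ := by rw [hzx, lie_neg]
    rw [hs] at h
    have h2 : ⁅y, ⁅x, z⁆⁆ + ⁅y, ⁅x, z⁆⁆ = 0 := by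
      have := h
      abel_nf at this ⊢
      linear_combination (norm := abel) -this
    have h3 : (2 : K) • ⁅y, ⁅x, z⁆⁆ = 0 := by
      rw [two_smul]; exact h2
    have h4 := (smul_eq_zero.mp h3).resolve_left (by norm_num)
    exact h4
  intro x y z
  rw [lie_lie, key y x z, key x y z, sub_zero]
end

section
/- Let g be a Lie algebra over a field of characteristic zero. The Lie bracket is cubic associative (satisfies ((xy)z)t = (x(yz))t = x((yz)t) = x(y(zt)) = (xy)(zt) = ((xy)z)t with the bracket as multiplication) if and only if g is 3-step nilpotent, i.e., [[[X,Y],Z],T] = 0 for all X,Y,Z,T. -/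
/-- The Lie bracket is cubic associative iff the Lie algebra is 3-step
nilpotent. -/
theorem lie_bracket_cubic_assoc_iff_three_step_nilpotent
    {K L : Type*} [Field K] [CharZero K] [LieRing L] [LieAlgebra K L] :
    ((∀ x y z t : L, ⁅⁅⁅x, y⁆, z⁆, t⁆ = ⁅⁅x, ⁅y, z⁆⁆, t⁆) ∧
     (∀ x y z t : L, ⁅⁅x, ⁅y, z⁆⁆, t⁆ = ⁅x, ⁅⁅y, z⁆, t⁆⁆) ∧
     (∀ x y z t : L, ⁅x, ⁅⁅y, z⁆, t⁆⁆ = ⁅x, ⁅y, ⁅z, t⁆⁆⁆) ∧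
     (∀ x y z t : L, ⁅x, ⁅y, ⁅z, t⁆⁆⁆ = ⁅⁅x, y⁆, ⁅z, t⁆⁆) ∧
     (∀ x y z t : L, ⁅⁅x, y⁆, ⁅z, t⁆⁆ = ⁅⁅⁅x, y⁆, z⁆, t⁆)) ↔
    (∀ x y z t : L, ⁅⁅⁅x, y⁆, z⁆, t⁆ = 0) := by
  constructor
  · rintro ⟨h1, -, -, -, -⟩
    have key : ∀ x y z t : L, ⁅⁅y, ⁅x, z⁆⁆, t⁆ = 0 := by
      intro x y z t
      have h := h1 x y z t
      rw [lie_lie x y z, sub_lie] at h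
      exact sub_eq_self.mp h
    intro x y z t
    rw [lie_lie x y z, sub_lie, key, key, sub_zero]
  · intro h
    have hB : ∀ x y z t : L, ⁅⁅x, ⁅y, z⁆⁆, t⁆ = 0 := by
      intro x y z t
      rw [← lie_skew x ⁅y, z⁆, neg_lie, h, neg_zero]
    have hC : ∀ x y z t : L, ⁅x, ⁅⁅y, z⁆, t⁆⁆ = 0 := by
      intro x y z t
      rw [← lie_skew x ⁅⁅y, z⁆, t⁆, h, neg_zero]
    have hD : ∀ x y z t : L, ⁅x, ⁅y, ⁅z, t⁆⁆⁆ = 0 := by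
      intro x y z t
      rw [← lie_skew x ⁅y, ⁅z, t⁆⁆, hB, neg_zero]
    have hE : ∀ x y z t : L, ⁅⁅x, y⁆, ⁅z, t⁆⁆ = 0 := by
      intro x y z t
      rw [leibniz_lie ⁅x, y⁆ z t, h, zero_add, ← lie_skew z ⁅⁅x, y⁆, t⁆, h,
        neg_zero]
    refine ⟨fun x y z t => ?_, fun x y z t => ?_, fun x y z t => ?_,
      fun x y z t => ?_, fun x y z t => ?_⟩
    · rw [h, hB]
    · rw [hB, hC]
    · rw [hC, hD]
    · rw [hD, hE]
    · rw [hE, h]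
end

section
/- Let g be a Lie algebra over a field of characteristic zero whose bracket satisfies [[[X,Y],Z],T] = [[X,[Y,Z]],T] for all X,Y,Z,T. Then [[[X,Y],Z],T] = 0 for all X,Y,Z,T, i.e., g is 3-step nilpotent. -/
/-- If the bracket satisfies `[[[X,Y],Z],T] = [[X,[Y,Z]],T]` then the Lie
algebra is 3-step nilpotent. -/
theorem cubic_assoc_first_relation_implies_three_step_nilpotent
    {K L : Type*} [Field K] [CharZero K] [LieRing L] [LieAlgebra K L]
    (h : ∀ X Y Z T : L, ⁅⁅⁅X, Y⁆, Z⁆, T⁆ = ⁅⁅X, ⁅Y, Z⁆⁆, T⁆) :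
    ∀ X Y Z T : L, ⁅⁅⁅X, Y⁆, Z⁆, T⁆ = 0 := by
  have key : ∀ A B C T : L, ⁅⁅A, ⁅B, C⁆⁆, T⁆ = 0 := by
    intro A B C T
    have hh := h B A C T
    rw [show (⁅⁅B, A⁆, C⁆ : L) = ⁅B, ⁅A, C⁆⁆ - ⁅A, ⁅B, C⁆⁆ from lie_lie B A C,
      sub_lie] at hh
    exact sub_eq_self.mp hh
  intro X Y Z T
  rw [h X Y Z T, key]
end

section
/- Let g be a Lie algebra over a field of characteristic zero and define the ternary product T(x,y,z) = [[x,y],z]. If T is totally associative, i.e., T(T(x,y,z),t,u) = T(x,T(y,z,t),u) = T(x,y,T(z,t,u)) for all x,y,z,t,u, then T(T(x,y,z),t,u) = 0 for all x,y,z,t,u; in particular g is 4-step nilpotent. -/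
/-- If the Lie triple product `T(x,y,z) = [[x,y],z]` is totally associative,
then `T(T(x,y,z),t,u) = 0` for all `x,y,z,t,u`; in particular the Lie algebra
is 4-step nilpotent. -/
theorem lie_triple_totally_assoc_implies_four_step_nilpotent
    {K L : Type*} [Field K] [CharZero K] [LieRing L] [LieAlgebra K L]
    (h1 : ∀ x y z t u : L, ⁅⁅⁅⁅x, y⁆, z⁆, t⁆, u⁆ = ⁅⁅x, ⁅⁅y, z⁆, t⁆⁆, u⁆)
    (h2 : ∀ x y z t u : L, ⁅⁅x, ⁅⁅y, z⁆, t⁆⁆, u⁆ = ⁅⁅x, y⁆, ⁅⁅z, t⁆, u⁆⁆) :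
    ∀ x y z t u : L, ⁅⁅⁅⁅x, y⁆, z⁆, t⁆, u⁆ = 0 := by
  set F : L → L → L → L → L → L := fun a b c d e => ⁅⁅⁅⁅a, b⁆, c⁆, d⁆, e⁆ with hF
  have key : ∀ a b c d e : L, F a b c d e = ⁅⁅a, b⁆, ⁅⁅c, d⁆, e⁆⁆ := fun a b c d e =>
    (h1 a b c d e).trans (h2 a b c d e)
  -- cyclic relation: F a b c d e = - F b c d a e
  have cyc : ∀ a b c d e : L, F a b c d e = -F b c d a e := by
    intro a b c d e
    have h : F a b c d e = ⁅⁅a, ⁅⁅b, c⁆, d⁆⁆, e⁆ := h1 a b c d e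
    rw [h, (lie_skew a ⁅⁅b, c⁆, d⁆).symm, neg_lie]
  -- Jacobi-type relation
  have jac : ∀ a b c d e : L, F a b c d e = -F c d e a b + F c d e b a := by
    intro a b c d e
    have h := key a b c d e
    rw [← lie_skew ⁅a, b⁆ ⁅⁅c, d⁆, e⁆, leibniz_lie, ← lie_skew a ⁅⁅⁅c, d⁆, e⁆, b⁆] at h
    rw [h]
    show -(F c d e a b + -F c d e b a) = -F c d e a b + F c d e b a
    abel
  intro x y z t u
  set au := F x y z t u with hau
  set ax := F y z t u x with hax
  set ay := F x z t u y with hay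
  set az := F x y t u z with haz
  set at' := F x y z u t with hat
  have p1 : F z t u x y = -ay := by rw [hay, cyc x z t u y, neg_neg]
  have p2 : F z t u y x = -ax := by rw [hax, cyc y z t u x, neg_neg]
  have p3 : F t u x y z = az := by
    rw [haz, cyc x y t u z, cyc y t u x z, neg_neg]
  have p4 : F t u x z y = ay := by
    rw [hay, cyc x z t u y, cyc z t u x y, neg_neg]
  have p5 : F u x y z t = -at' := by
    rw [hat, cyc x y z u t, cyc y z u x t, cyc z u x y t, neg_neg, neg_neg]
  have p6 : F u x y t z = -az := by
    rw [haz, cyc x y t u z, cyc y t u x z, cyc t u x y z, neg_neg, neg_neg]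
  have p7 : F y z t x u = -au := by rw [hau, cyc x y z t u, neg_neg]
  have hA := jac x y z t u
  rw [p1, p2, ← hau] at hA          -- au = -(-ay) + -ax
  have hB := jac y z t u x
  rw [p3, p4, ← hax] at hB          -- ax = -az + ay
  have hC := jac z t u x y
  rw [p1, p5, p6] at hC             -- -ay = -(-at') + -az
  have hD := jac t u x y z
  rw [p3, ← hau, ← hat] at hD       -- az = -au + at'
  have hE := jac u x y z t
  rw [p5, p7, ← hax] at hE          -- -at' = -ax + -au
  have h3 : (3 : K) • au = 0 := by
    linear_combination (norm := module) (2 : K) • hA - hB - hC + (2 : K) • hD - hE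
  have h30 : (3 : K) ≠ 0 := by norm_num
  have h0 : au = 0 := (smul_eq_zero.mp h3).resolve_left h30
  rw [hau] at h0
  exact h0
end

section
/- Let μ0 be the bracket of a two-step nilpotent Lie algebra g0 and φ a skew-symmetric bilinear map on g0 with values in g0. Then the Hochschild coboundary δ_H φ and the Chevalley coboundary δ_C φ both vanish if and only if φ(μ0(X,Y),Z) + μ0(φ(X,Y),Z) = 0 for all X,Y,Z in g0. -/
/-- On a two-step nilpotent Lie algebra, a skew-symmetric bilinear map `φ`
satisfies `δ_H φ = 0` and `δ_C φ = 0` iff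
`φ([X,Y],Z) + [φ(X,Y),Z] = 0` for all `X,Y,Z`. -/
theorem hochschild_chevalley_cocycle_iff
    {K L : Type*} [Field K] [CharZero K] [LieRing L] [LieAlgebra K L]
    (h2 : ∀ X Y Z : L, ⁅⁅X, Y⁆, Z⁆ = 0)
    (φ : L →ₗ[K] L →ₗ[K] L)
    (hskew : ∀ X Y : L, φ X Y = - φ Y X) :
    ((∀ X Y Z : L, ⁅X, φ Y Z⁆ - φ ⁅X, Y⁆ Z + φ X ⁅Y, Z⁆ - ⁅φ X Y, Z⁆ = 0) ∧
     (∀ X Y Z : L,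
       ⁅φ X Y, Z⁆ + ⁅φ Y Z, X⁆ + ⁅φ Z X, Y⁆
         + φ ⁅X, Y⁆ Z + φ ⁅Y, Z⁆ X + φ ⁅Z, X⁆ Y = 0)) ↔
    (∀ X Y Z : L, φ ⁅X, Y⁆ Z + ⁅φ X Y, Z⁆ = 0) := by
  constructor
  · rintro ⟨hH, -⟩ X Y Z
    have e : ∀ X Y Z : L,
        φ ⁅X, Y⁆ Z + ⁅φ X Y, Z⁆ = -(φ ⁅Y, Z⁆ X + ⁅φ Y Z, X⁆) := by
      intro X Y Z
      have h := hH X Y Z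
      rw [hskew X ⁅Y, Z⁆, ← lie_skew X (φ Y Z)] at h
      have h' : φ ⁅X, Y⁆ Z + ⁅φ X Y, Z⁆ + (φ ⁅Y, Z⁆ X + ⁅φ Y Z, X⁆) = 0 := by
        calc φ ⁅X, Y⁆ Z + ⁅φ X Y, Z⁆ + (φ ⁅Y, Z⁆ X + ⁅φ Y Z, X⁆)
            = -(-⁅φ Y Z, X⁆ - φ ⁅X, Y⁆ Z + -φ ⁅Y, Z⁆ X - ⁅φ X Y, Z⁆) := by abel
          _ = 0 := by rw [h, neg_zero]
      exact eq_neg_of_add_eq_zero_left h'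
    have key : φ ⁅X, Y⁆ Z + ⁅φ X Y, Z⁆ = -(φ ⁅X, Y⁆ Z + ⁅φ X Y, Z⁆) := by
      calc φ ⁅X, Y⁆ Z + ⁅φ X Y, Z⁆
          = -(φ ⁅Y, Z⁆ X + ⁅φ Y Z, X⁆) := e X Y Z
        _ = -(-(φ ⁅Z, X⁆ Y + ⁅φ Z X, Y⁆)) := by rw [e Y Z X]
        _ = φ ⁅Z, X⁆ Y + ⁅φ Z X, Y⁆ := neg_neg _
        _ = -(φ ⁅X, Y⁆ Z + ⁅φ X Y, Z⁆) := e Z X Y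
    have h2s : (2 : K) • (φ ⁅X, Y⁆ Z + ⁅φ X Y, Z⁆) = 0 := by
      rw [two_smul]
      nth_rewrite 2 [key]
      exact add_neg_cancel _
    rcases smul_eq_zero.mp h2s with h | h
    · exact absurd h two_ne_zero
    · exact h
  · intro hA
    constructor
    · intro X Y Z
      rw [hskew X ⁅Y, Z⁆, ← lie_skew X (φ Y Z)]
      calc -⁅φ Y Z, X⁆ - φ ⁅X, Y⁆ Z + -φ ⁅Y, Z⁆ X - ⁅φ X Y, Z⁆
          = -(φ ⁅Y, Z⁆ X + ⁅φ Y Z, X⁆) - (φ ⁅X, Y⁆ Z + ⁅φ X Y, Z⁆) := by abel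
        _ = 0 := by rw [hA Y Z X, hA X Y Z, neg_zero, zero_sub, neg_zero]
    · intro X Y Z
      calc ⁅φ X Y, Z⁆ + ⁅φ Y Z, X⁆ + ⁅φ Z X, Y⁆
            + φ ⁅X, Y⁆ Z + φ ⁅Y, Z⁆ X + φ ⁅Z, X⁆ Y
          = (φ ⁅X, Y⁆ Z + ⁅φ X Y, Z⁆) + (φ ⁅Y, Z⁆ X + ⁅φ Y Z, X⁆)
            + (φ ⁅Z, X⁆ Y + ⁅φ Z X, Y⁆) := by abel
        _ = 0 := by rw [hA X Y Z, hA Y Z X, hA Z X Y]; simp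
end

section
/- Let g0 be a two-step nilpotent Lie algebra with bracket μ0 and let φ be a skew-symmetric bilinear map on g0. The deformed bracket μ_t = μ0 + tφ is the bracket of a two-step nilpotent Lie algebra for all t if and only if: (1) φ(φ(X,Y),Z) = 0 for all X,Y,Z, (2) δ_H φ = 0, and (3) δ_C φ = 0. -/
/-- The linear deformation `μ_t = μ0 + tφ` of the bracket of a two-step
nilpotent Lie algebra is the bracket of a two-step nilpotent Lie algebra for
all `t` iff `φ ∘ φ = 0`, `δ_H φ = 0` and `δ_C φ = 0`. -/
theorem linear_deformation_two_step_nilpotent_iff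
    {K L : Type*} [Field K] [CharZero K] [LieRing L] [LieAlgebra K L]
    (h2 : ∀ X Y Z : L, ⁅⁅X, Y⁆, Z⁆ = 0)
    (φ : L →ₗ[K] L →ₗ[K] L)
    (hskew : ∀ X Y : L, φ X Y = - φ Y X) :
    (∀ t : K, ∀ X Y Z : L,
      ⁅⁅X, Y⁆ + t • φ X Y, Z⁆ + t • φ (⁅X, Y⁆ + t • φ X Y) Z = 0) ↔
    ((∀ X Y Z : L, φ (φ X Y) Z = 0) ∧
     (∀ X Y Z : L, ⁅X, φ Y Z⁆ - φ ⁅X, Y⁆ Z + φ X ⁅Y, Z⁆ - ⁅φ X Y, Z⁆ = 0) ∧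
     (∀ X Y Z : L,
       ⁅φ X Y, Z⁆ + ⁅φ Y Z, X⁆ + ⁅φ Z X, Y⁆
         + φ ⁅X, Y⁆ Z + φ ⁅Y, Z⁆ X + φ ⁅Z, X⁆ Y = 0)) := by
  have key : ∀ t : K, ∀ X Y Z : L,
      ⁅⁅X, Y⁆ + t • φ X Y, Z⁆ + t • φ (⁅X, Y⁆ + t • φ X Y) Z
        = t • (⁅φ X Y, Z⁆ + φ ⁅X, Y⁆ Z) + (t * t) • φ (φ X Y) Z := by
    intro t X Y Z
    simp only [add_lie, smul_lie, map_add, map_smul, LinearMap.add_apply,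
      LinearMap.smul_apply, h2, smul_add, mul_smul]
    abel
  constructor
  · intro h
    -- from t = 1 and t = -1 deduce S = 0 and B = 0
    have hB : ∀ X Y Z : L, φ (φ X Y) Z = 0 := by
      intro X Y Z
      have e1 := (h 1 X Y Z).symm.trans (key 1 X Y Z)
      have e2 := (h (-1) X Y Z).symm.trans (key (-1) X Y Z)
      simp only [one_smul, one_mul, neg_smul, neg_neg, neg_one_mul] at e1 e2
      have : (2 : K) • φ (φ X Y) Z = 0 := by
        have hsum : φ (φ X Y) Z + φ (φ X Y) Z
            = (⁅φ X Y, Z⁆ + φ ⁅X, Y⁆ Z + φ (φ X Y) Z)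
              + (-(⁅φ X Y, Z⁆ + φ ⁅X, Y⁆ Z) + φ (φ X Y) Z) := by abel
        rw [two_smul, hsum, ← e1, ← e2, add_zero]
      rcases smul_eq_zero.mp this with h | h
      · exact absurd h two_ne_zero
      · exact h
    have hS : ∀ X Y Z : L, ⁅φ X Y, Z⁆ + φ ⁅X, Y⁆ Z = 0 := by
      intro X Y Z
      have e1 := (h 1 X Y Z).symm.trans (key 1 X Y Z)
      rw [hB] at e1
      simpa using e1.symm
    refine ⟨hB, ?_, ?_⟩
    · intro X Y Z
      have a1 : ⁅φ X Y, Z⁆ = - φ ⁅X, Y⁆ Z := eq_neg_of_add_eq_zero_left (hS X Y Z)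
      have a2 : ⁅φ Y Z, X⁆ = - φ ⁅Y, Z⁆ X := eq_neg_of_add_eq_zero_left (hS Y Z X)
      rw [← lie_skew X (φ Y Z), a1, a2, hskew X ⁅Y, Z⁆]
      abel
    · intro X Y Z
      have a1 : ⁅φ X Y, Z⁆ = - φ ⁅X, Y⁆ Z := eq_neg_of_add_eq_zero_left (hS X Y Z)
      have a2 : ⁅φ Y Z, X⁆ = - φ ⁅Y, Z⁆ X := eq_neg_of_add_eq_zero_left (hS Y Z X)
      have a3 : ⁅φ Z X, Y⁆ = - φ ⁅Z, X⁆ Y := eq_neg_of_add_eq_zero_left (hS Z X Y)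
      rw [a1, a2, a3]; abel
  · rintro ⟨hB, hH, _⟩
    -- from Hochschild cocycle condition deduce S = 0
    have hcyc : ∀ X Y Z : L,
        ⁅φ X Y, Z⁆ + φ ⁅X, Y⁆ Z = -(⁅φ Y Z, X⁆ + φ ⁅Y, Z⁆ X) := by
      intro X Y Z
      have e := hH X Y Z
      rw [← lie_skew X (φ Y Z), hskew X ⁅Y, Z⁆] at e
      have h0 : ⁅φ X Y, Z⁆ + φ ⁅X, Y⁆ Z + (⁅φ Y Z, X⁆ + φ ⁅Y, Z⁆ X) = 0 := by
        have heq : ⁅φ X Y, Z⁆ + φ ⁅X, Y⁆ Z + (⁅φ Y Z, X⁆ + φ ⁅Y, Z⁆ X)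
            = -(-⁅φ Y Z, X⁆ - φ ⁅X, Y⁆ Z + -φ ⁅Y, Z⁆ X - ⁅φ X Y, Z⁆) := by abel
        rw [heq, e, neg_zero]
      exact eq_neg_of_add_eq_zero_left h0
    have hS : ∀ X Y Z : L, ⁅φ X Y, Z⁆ + φ ⁅X, Y⁆ Z = 0 := by
      intro X Y Z
      have h1 := hcyc X Y Z
      have h2' := hcyc Y Z X
      have h3 := hcyc Z X Y
      have : (2 : K) • (⁅φ X Y, Z⁆ + φ ⁅X, Y⁆ Z) = 0 := by
        rw [two_smul]
        nth_rewrite 2 [h1]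
        rw [h2', h3]; abel
      rcases smul_eq_zero.mp this with h | h
      · exact absurd h two_ne_zero
      · exact h
    intro t X Y Z
    rw [key, hS, hB, smul_zero, smul_zero, add_zero]
end

section
/- Let h_{2p+1} be the (2p+1)-dimensional Heisenberg Lie algebra with basis X1,...,X_{2p+1} and brackets [X_{2i−1}, X_{2i}] = X_{2p+1} for 1 ≤ i ≤ p. Then the space of skew-symmetric bilinear maps φ: h × h → h satisfying φ([X,Y],Z) + [φ(X,Y),Z] = 0 for all X,Y,Z has dimension p(2p+1) over the base field. -/
set_option linter.unusedSectionVars false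

namespace HeisCo

variable {K L : Type*} [Field K] [CharZero K] [LieRing L] [LieAlgebra K L]

abbrev Idx (p : ℕ) := Σ j : Fin (2*p), Fin j.val

/-- structure constants of the bracket -/
def bc (p : ℕ) (K : Type*) [Field K] (i j : Fin (2*p+1)) : K :=
  if i.val % 2 = 0 ∧ j.val = i.val + 1 then 1
  else if j.val % 2 = 0 ∧ i.val = j.val + 1 then -1 else 0

/-- coefficient of `Z` in `φ Z (e j)` determined by `w` -/
def rho (p : ℕ) (w : Fin (2*p) → K) (j : Fin (2*p+1)) : K :=
  if hj : j.val < 2*p then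
    if h2 : j.val % 2 = 1 then -w ⟨j.val - 1, by omega⟩ else w ⟨j.val + 1, by omega⟩
  else 0

/-- the full scalar-valued skew form determined by the parameters -/
def psi (p : ℕ) (m : (Idx p → K) × (Fin (2*p) → K)) (i j : Fin (2*p+1)) : K :=
  if hi : i.val < 2*p then
    if hj : j.val < 2*p then
      if hij : i.val < j.val then m.1 ⟨⟨j.val, hj⟩, ⟨i.val, hij⟩⟩
      else if hji : j.val < i.val then -m.1 ⟨⟨i.val, hi⟩, ⟨j.val, hji⟩⟩
      else 0
    else -rho p m.2 i
  else rho p m.2 j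

lemma bc_skew (p : ℕ) (i j : Fin (2*p+1)) : bc p K i j = - bc p K j i := by
  unfold bc; split_ifs <;> first | ring1 | (exfalso; omega)

lemma bc_eq_zero (p : ℕ) {i j : Fin (2*p+1)} (h : ¬ i.val < 2*p ∨ ¬ j.val < 2*p) :
    bc p K i j = 0 := by
  have hi := i.isLt; have hj := j.isLt
  unfold bc; split_ifs <;> first | rfl | (exfalso; omega)

lemma rho_last (p : ℕ) (w : Fin (2*p) → K) {j : Fin (2*p+1)} (h : ¬ j.val < 2*p) :
    rho p w j = 0 := by unfold rho; split_ifs <;> tauto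

lemma psi_skew (p : ℕ) (m : (Idx p → K) × (Fin (2*p) → K)) (i j : Fin (2*p+1)) :
    psi p m i j = - psi p m j i := by
  unfold psi
  split_ifs <;>
    first
      | ring1
      | (exfalso; omega)
      | (rw [rho_last p m.2 (by omega), rho_last p m.2 (by omega)]; ring)

lemma psi_diag (p : ℕ) (m : (Idx p → K) × (Fin (2*p) → K)) (i : Fin (2*p+1)) :
    psi p m i i = 0 := by
  have h := psi_skew p m i i
  rw [eq_neg_iff_add_eq_zero, add_self_eq_zero] at h
  exact h

lemma bc_diag (p : ℕ) (i : Fin (2*p+1)) : bc p K i i = 0 := by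
  have h := bc_skew (K := K) p i i
  rw [eq_neg_iff_add_eq_zero, add_self_eq_zero] at h
  exact h

lemma sum_w_bc (p : ℕ) (w : Fin (2*p) → K) (j : Fin (2*p+1)) :
    (∑ k : Fin (2*p), w k * bc p K k.castSucc j) = - rho p w j := by
  rcases lt_or_ge j.val (2*p) with hj | hj
  · rcases Nat.even_or_odd j.val with he | ho
    · -- j even : single term k = j+1, bc = -1, rho = w (j+1)
      have he2 : j.val % 2 = 0 := Nat.even_iff.mp he
      have hb : j.val + 1 < 2*p := by omega
      rw [Finset.sum_eq_single (⟨j.val+1, hb⟩ : Fin (2*p))]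
      · unfold bc rho
        simp only [Fin.castSucc_mk, and_true]
        split_ifs <;> first | ring1 | (exfalso; omega)
      · intro k _ hk
        have hkk : k.val ≠ j.val + 1 := fun h => hk (by apply Fin.ext; exact h)
        unfold bc
        rw [if_neg (by simp only [Fin.coe_castSucc]; omega),
            if_neg (by simp only [Fin.coe_castSucc]; omega), mul_zero]
      · intro h; exact absurd (Finset.mem_univ _) h
    · -- j odd : single term k = j-1, bc = 1, rho = -w (j-1)
      have ho2 : j.val % 2 = 1 := Nat.odd_iff.mp ho
      have hb : j.val - 1 < 2*p := by omega
      rw [Finset.sum_eq_single (⟨j.val-1, hb⟩ : Fin (2*p))]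
      · unfold bc rho
        simp only [Fin.castSucc_mk, and_true]
        split_ifs <;> first | ring1 | (exfalso; omega)
      · intro k _ hk
        have hkk : k.val ≠ j.val - 1 := fun h => hk (by apply Fin.ext; exact h)
        unfold bc
        rw [if_neg (by simp only [Fin.coe_castSucc]; omega),
            if_neg (by simp only [Fin.coe_castSucc]; omega), mul_zero]
      · intro h; exact absurd (Finset.mem_univ _) h
  · rw [rho_last p w (by omega), neg_zero]
    apply Finset.sum_eq_zero
    intro k _
    rw [bc_eq_zero p (Or.inr (by omega)), mul_zero]


variable (p : ℕ) (B : Module.Basis (Fin (2*p+1)) K L)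

/-- the vector with coordinates `w` in the first `2p` basis vectors -/
noncomputable def wt (w : Fin (2*p) → K) : L := ∑ k : Fin (2*p), w k • B k.castSucc

noncomputable def cmat (m : (Idx p → K) × (Fin (2*p) → K)) (i j : Fin (2*p+1)) : L :=
  psi p m i j • B (Fin.last (2*p)) + bc p K i j • wt p B m.2

lemma repr_wt_last (w : Fin (2*p) → K) : B.repr (wt p B w) (Fin.last (2*p)) = 0 := by
  unfold wt
  rw [map_sum, Finsupp.coe_finset_sum, Finset.sum_apply]
  apply Finset.sum_eq_zero
  intro k _
  rw [map_smul, Finsupp.smul_apply, B.repr_self, Finsupp.single_apply,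
    if_neg (Fin.ne_of_lt (Fin.castSucc_lt_last k)), smul_zero]

lemma repr_wt_cast (w : Fin (2*p) → K) (k : Fin (2*p)) :
    B.repr (wt p B w) k.castSucc = w k := by
  unfold wt
  rw [map_sum, Finsupp.coe_finset_sum, Finset.sum_apply]
  rw [Finset.sum_eq_single k]
  · rw [map_smul, Finsupp.smul_apply, B.repr_self, Finsupp.single_apply, if_pos rfl,
      smul_eq_mul, mul_one]
  · intro t _ ht
    rw [map_smul, Finsupp.smul_apply, B.repr_self, Finsupp.single_apply,
      if_neg (by simp [Fin.castSucc_inj]; exact ht), smul_zero]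
  · intro h; exact absurd (Finset.mem_univ _) h

lemma repr_cmat_last (m : (Idx p → K) × (Fin (2*p) → K)) (i j : Fin (2*p+1)) :
    B.repr (cmat p B m i j) (Fin.last (2*p)) = psi p m i j := by
  unfold cmat
  rw [map_add, map_smul, map_smul, Finsupp.add_apply, Finsupp.smul_apply, Finsupp.smul_apply,
    B.repr_self, repr_wt_last, Finsupp.single_apply, if_pos rfl]
  simp

lemma repr_cmat_cast (m : (Idx p → K) × (Fin (2*p) → K)) (i j : Fin (2*p+1)) (k : Fin (2*p)) :
    B.repr (cmat p B m i j) k.castSucc = bc p K i j * m.2 k := by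
  unfold cmat
  rw [map_add, map_smul, map_smul, Finsupp.add_apply, Finsupp.smul_apply, Finsupp.smul_apply,
    B.repr_self, repr_wt_cast, Finsupp.single_apply,
    if_neg (Ne.symm (Fin.ne_of_lt (Fin.castSucc_lt_last k)))]
  simp

lemma cmat_skew (m : (Idx p → K) × (Fin (2*p) → K)) (i j : Fin (2*p+1)) :
    cmat p B m i j = - cmat p B m j i := by
  unfold cmat
  rw [psi_skew, bc_skew]
  module


lemma rho_add (w w' : Fin (2*p) → K) (j) : rho p (w + w') j = rho p w j + rho p w' j := by
  unfold rho; split_ifs <;> simp <;> ring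

lemma rho_smul (s : K) (w : Fin (2*p) → K) (j) : rho p (s • w) j = s * rho p w j := by
  unfold rho; split_ifs <;> simp <;> ring

lemma psi_add (m m' : (Idx p → K) × (Fin (2*p) → K)) (i j) :
    psi p (m + m') i j = psi p m i j + psi p m' i j := by
  unfold psi
  simp only [Prod.fst_add, Prod.snd_add, Pi.add_apply, rho_add]
  split_ifs <;> ring

lemma psi_smul (s : K) (m : (Idx p → K) × (Fin (2*p) → K)) (i j) :
    psi p (s • m) i j = s * psi p m i j := by
  unfold psi
  simp only [Prod.smul_fst, Prod.smul_snd, Pi.smul_apply, rho_smul, smul_eq_mul]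
  split_ifs <;> ring

lemma wt_add (w w' : Fin (2*p) → K) : wt p B (w + w') = wt p B w + wt p B w' := by
  unfold wt; rw [← Finset.sum_add_distrib]
  exact Finset.sum_congr rfl fun k _ => by rw [Pi.add_apply, add_smul]

lemma wt_smul (s : K) (w : Fin (2*p) → K) : wt p B (s • w) = s • wt p B w := by
  unfold wt; rw [Finset.smul_sum]
  exact Finset.sum_congr rfl fun k _ => by rw [Pi.smul_apply, smul_eq_mul, mul_smul]

lemma cmat_add (m m' : (Idx p → K) × (Fin (2*p) → K)) (i j) :
    cmat p B (m + m') i j = cmat p B m i j + cmat p B m' i j := by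
  unfold cmat
  rw [psi_add, Prod.snd_add, wt_add]
  module

lemma cmat_smul (s : K) (m : (Idx p → K) × (Fin (2*p) → K)) (i j) :
    cmat p B (s • m) i j = s • cmat p B m i j := by
  unfold cmat
  rw [psi_smul, Prod.smul_snd, wt_smul]
  module

noncomputable def T : ((Idx p → K) × (Fin (2*p) → K)) →ₗ[K] (L →ₗ[K] L →ₗ[K] L) where
  toFun m := B.constr K fun i => B.constr K fun j => cmat p B m i j
  map_add' m m' := by
    refine B.ext fun i => ?_
    rw [LinearMap.add_apply, Module.Basis.constr_basis, Module.Basis.constr_basis, Module.Basis.constr_basis,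
      ← map_add]
    exact congrArg _ (funext fun j => cmat_add p B m m' i j)
  map_smul' s m := by
    refine B.ext fun i => ?_
    rw [RingHom.id_apply, LinearMap.smul_apply, Module.Basis.constr_basis, Module.Basis.constr_basis,
      ← map_smul]
    exact congrArg _ (funext fun j => cmat_smul p B s m i j)

lemma T_apply_basis (m) (i j : Fin (2*p+1)) :
    T p B m (B i) (B j) = cmat p B m i j := by
  unfold T
  simp only [LinearMap.coe_mk, AddHom.coe_mk, Module.Basis.constr_basis]

lemma psi_last_left (m : (Idx p → K) × (Fin (2*p) → K)) (j) :
    psi p m (Fin.last (2*p)) j = rho p m.2 j := by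
  unfold psi
  rw [dif_neg (by simp)]


noncomputable def brkt (K L : Type*) [Field K] [LieRing L] [LieAlgebra K L] :
    L →ₗ[K] L →ₗ[K] L :=
  LinearMap.mk₂ K (fun X Y => ⁅X, Y⁆) add_lie smul_lie lie_add lie_smul

lemma sum_lie' (K : Type*) {L ι : Type*} [Field K] [LieRing L] [LieAlgebra K L]
    (s : Finset ι) (f : ι → L) (x : L) :
    ⁅∑ i ∈ s, f i, x⁆ = ∑ i ∈ s, ⁅f i, x⁆ := by
  have := LinearMap.congr_fun (map_sum (brkt K L) f s) x
  simpa only [brkt, LinearMap.mk₂_apply, LinearMap.sum_apply] using this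

section WithHB

variable (hB : ∀ i j : Fin (2*p+1),
      ⁅B i, B j⁆ =
        if i.val % 2 = 0 ∧ j.val = i.val + 1 then B (Fin.last (2*p))
        else if j.val % 2 = 0 ∧ i.val = j.val + 1 then -B (Fin.last (2*p))
        else 0)

include hB

lemma hbr (i j : Fin (2*p+1)) : ⁅B i, B j⁆ = bc p K i j • B (Fin.last (2*p)) := by
  rw [hB]
  unfold bc
  split_ifs <;> simp

lemma lie_wt (w : Fin (2*p) → K) (j : Fin (2*p+1)) :
    ⁅wt p B w, B j⁆ = (- rho p w j) • B (Fin.last (2*p)) := by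
  unfold wt
  rw [sum_lie' K, ← sum_w_bc, Finset.sum_smul]
  exact Finset.sum_congr rfl fun k _ => by
    rw [smul_lie, hbr p B hB, smul_smul]

lemma lie_basis (u : L) (j : Fin (2*p+1)) :
    ⁅u, B j⁆ = (- rho p (fun k => B.repr u k.castSucc) j) • B (Fin.last (2*p)) := by
  conv_lhs => rw [← B.sum_repr u]
  rw [sum_lie' K, ← sum_w_bc, Finset.sum_smul,
    Fin.sum_univ_castSucc (f := fun i => ⁅B.repr u i • B i, B j⁆)]
  rw [smul_lie, hbr p B hB, bc_eq_zero p (Or.inl (by simp)), zero_smul, smul_zero, add_zero]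
  exact Finset.sum_congr rfl fun k _ => by
    rw [smul_lie, hbr p B hB, smul_smul]

lemma T_skew (m) (X Y : L) : T p B m X Y = - T p B m Y X := by
  have h : (T p B m) + (T p B m).flip = 0 := by
    refine B.ext fun i => B.ext fun j => ?_
    simp only [LinearMap.add_apply, LinearMap.flip_apply, LinearMap.zero_apply,
      T_apply_basis]
    rw [cmat_skew]
    abel
  have := LinearMap.congr_fun (LinearMap.congr_fun h X) Y
  simp only [LinearMap.add_apply, LinearMap.flip_apply, LinearMap.zero_apply] at this
  exact eq_neg_of_add_eq_zero_left this

lemma T_cocycle (m) (X Y W : L) :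
    T p B m ⁅X, Y⁆ W + ⁅T p B m X Y, W⁆ = 0 := by
  set φ := T p B m with hφ
  have h : (brkt K L).compr₂ φ + φ.compr₂ (brkt K L) = 0 := by
    refine B.ext fun i => B.ext fun j => B.ext fun k => ?_
    simp only [LinearMap.add_apply, LinearMap.compr₂_apply, LinearMap.zero_apply,
      brkt, LinearMap.mk₂_apply]
    rw [hφ, hbr p B hB i j, map_smul, LinearMap.smul_apply, T_apply_basis, T_apply_basis]
    have h1 : cmat p B m (Fin.last (2*p)) k = rho p m.2 k • B (Fin.last (2*p)) := by
      unfold cmat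
      rw [psi_last_left, bc_eq_zero p (Or.inl (by simp)), zero_smul, add_zero]
    have h2 : ⁅cmat p B m i j, B k⁆ = bc p K i j • ((- rho p m.2 k) • B (Fin.last (2*p))) := by
      unfold cmat
      rw [add_lie, smul_lie, smul_lie, hbr p B hB, bc_eq_zero p (Or.inl (by simp)),
        zero_smul, smul_zero, zero_add, lie_wt p B hB]
    rw [h1, h2]
    module
  have := LinearMap.congr_fun (LinearMap.congr_fun (LinearMap.congr_fun h X) Y) W
  simpa only [LinearMap.add_apply, LinearMap.compr₂_apply, LinearMap.zero_apply,
    brkt, LinearMap.mk₂_apply, hφ] using this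


end WithHB

lemma psi_lt (m : (Idx p → K) × (Fin (2*p) → K)) {i j : Fin (2*p+1)}
    (hi : i.val < 2*p) (hj : j.val < 2*p) (hij : i.val < j.val) :
    psi p m i j = m.1 ⟨⟨j.val, hj⟩, ⟨i.val, hij⟩⟩ := by
  unfold psi; rw [dif_pos hi, dif_pos hj, dif_pos hij]

lemma rho_even (w : Fin (2*p) → K) {j : Fin (2*p+1)} (h0 : j.val % 2 = 0) (h1 : j.val < 2*p) :
    rho p w j = w ⟨j.val+1, by omega⟩ := by
  unfold rho; rw [dif_pos h1, dif_neg (by omega)]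

lemma rho_odd (w : Fin (2*p) → K) {j : Fin (2*p+1)} (h0 : j.val % 2 = 1) (h1 : j.val < 2*p) :
    rho p w j = -w ⟨j.val-1, by omega⟩ := by
  unfold rho; rw [dif_pos h1, dif_pos h0]

lemma T_inj : Function.Injective (T p B) := by
  rw [injective_iff_map_eq_zero]
  intro m hm
  have hc : ∀ i j, cmat p B m i j = 0 := by
    intro i j
    rw [← T_apply_basis p B m i j, hm]
    rfl
  have hw : m.2 = 0 := by
    funext k
    have hk := k.isLt
    have h1 := repr_cmat_cast p B m ⟨2*(k.val/2), by omega⟩ ⟨2*(k.val/2)+1, by omega⟩ k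
    rw [hc] at h1
    have hbc : bc p K (⟨2*(k.val/2), by omega⟩ : Fin (2*p+1)) ⟨2*(k.val/2)+1, by omega⟩ = 1 := by
      unfold bc; rw [if_pos ⟨show (2*(k.val/2)) % 2 = 0 by omega, rfl⟩]
    rw [hbc, one_mul] at h1
    simp only [map_zero, Finsupp.coe_zero, Pi.zero_apply] at h1
    exact h1.symm
  have ha : m.1 = 0 := by
    funext q
    rcases q with ⟨j, i⟩
    have hj := j.isLt
    have hi := i.isLt
    have h1 := repr_cmat_last p B m ⟨i.val, by omega⟩ ⟨j.val, by omega⟩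
    rw [hc, psi_lt p m (lt_trans i.isLt j.isLt) j.isLt i.isLt] at h1
    simp only [map_zero, Finsupp.coe_zero, Pi.zero_apply] at h1
    rw [Pi.zero_apply]
    exact h1.symm
  exact Prod.ext ha hw


section Surj

variable (hB : ∀ i j : Fin (2*p+1),
      ⁅B i, B j⁆ =
        if i.val % 2 = 0 ∧ j.val = i.val + 1 then B (Fin.last (2*p))
        else if j.val % 2 = 0 ∧ i.val = j.val + 1 then -B (Fin.last (2*p))
        else 0)
variable (φ : L →ₗ[K] L →ₗ[K] L)
variable (hsk : ∀ X Y : L, φ X Y = - φ Y X)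
variable (hcy : ∀ X Y W : L, φ ⁅X, Y⁆ W + ⁅φ X Y, W⁆ = 0)

noncomputable def wOf : Fin (2*p) → K := fun k =>
  B.repr (φ (B ⟨2*(k.val/2), by have := k.isLt; omega⟩)
            (B ⟨2*(k.val/2)+1, by have := k.isLt; omega⟩)) k.castSucc

noncomputable def aOf : Idx p → K := fun q =>
  B.repr (φ (B ⟨q.2.val, by have := q.2.isLt; have := q.1.isLt; omega⟩)
            (B ⟨q.1.val, by have := q.1.isLt; omega⟩)) (Fin.last (2*p))

lemma wOf_eq (t : Fin (2*p)) (k0 : ℕ) (hk0 : k0 = 2*(t.val/2))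
    (h1 : k0 < 2*p+1) (h2 : k0+1 < 2*p+1) :
    wOf p B φ t = B.repr (φ (B ⟨k0,h1⟩) (B ⟨k0+1,h2⟩)) t.castSucc := by
  subst hk0; rfl

include hsk

lemma diag_zero (X : L) : φ X X = 0 := by
  have h := hsk X X
  have h2 : (2:K) • φ X X = 0 := by rw [two_smul]; nth_rewrite 2 [h]; simp
  rcases smul_eq_zero.mp h2 with h3 | h3
  · exact absurd h3 two_ne_zero
  · exact h3

omit hsk
include hB hcy

lemma F1' (X Y : L) (h0 : ⁅X, Y⁆ = 0) (k : Fin (2*p)) :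
    B.repr (φ X Y) k.castSucc = 0 := by
  have hk := k.isLt
  have hbr0 : ∀ j : Fin (2*p+1), ⁅φ X Y, B j⁆ = 0 := by
    intro j
    have := hcy X Y (B j)
    rw [h0, map_zero, LinearMap.zero_apply, zero_add] at this
    exact this
  rcases Nat.even_or_odd k.val with he | ho
  · have he2 : k.val % 2 = 0 := Nat.even_iff.mp he
    have hj : (k.val+1) < 2*p+1 := by omega
    have h := hbr0 ⟨k.val+1, hj⟩
    rw [lie_basis p B hB] at h
    rcases smul_eq_zero.mp h with h2 | h2
    · rw [neg_eq_zero, rho_odd p _ (by show (k.val+1) % 2 = 1; omega)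
        (by show k.val+1 < 2*p; omega)] at h2
      rw [neg_eq_zero] at h2
      exact h2
    · exact absurd h2 (B.ne_zero _)
  · have ho2 : k.val % 2 = 1 := Nat.odd_iff.mp ho
    have hj : (k.val-1) < 2*p+1 := by omega
    have h := hbr0 ⟨k.val-1, hj⟩
    rw [lie_basis p B hB] at h
    rcases smul_eq_zero.mp h with h2 | h2
    · rw [neg_eq_zero, rho_even p _ (by show (k.val-1) % 2 = 0; omega)
        (by show k.val-1 < 2*p; omega)] at h2
      convert h2 using 2
      exact Fin.ext (by show k.val = k.val - 1 + 1; omega)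
    · exact absurd h2 (B.ne_zero _)

lemma pair_agree (k0 l0 : ℕ) (hk0 : k0 % 2 = 0) (hk : k0+1 < 2*p+1)
    (hl0 : l0 % 2 = 0) (hl : l0+1 < 2*p+1) (t : Fin (2*p)) :
    B.repr (φ (B ⟨k0, by omega⟩) (B ⟨k0+1, hk⟩)) t.castSucc
      = B.repr (φ (B ⟨l0, by omega⟩) (B ⟨l0+1, hl⟩)) t.castSucc := by
  by_cases hkl : k0 = l0
  · subst hkl; rfl
  · set a : L := B ⟨k0, by omega⟩
    set b : L := B ⟨l0, by omega⟩
    set c : L := B ⟨k0+1, hk⟩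
    set d : L := B ⟨l0+1, hl⟩
    have had : ⁅a, d⁆ = 0 := by
      rw [hB]
      rw [if_neg (by show ¬(k0 % 2 = 0 ∧ l0+1 = k0+1); omega),
        if_neg (by show ¬((l0+1) % 2 = 0 ∧ k0 = (l0+1)+1); omega)]
    have hbc : ⁅b, c⁆ = 0 := by
      rw [hB]
      rw [if_neg (by show ¬(l0 % 2 = 0 ∧ k0+1 = l0+1); omega),
        if_neg (by show ¬((k0+1) % 2 = 0 ∧ l0 = (k0+1)+1); omega)]
    have hacz : ⁅a, c⁆ = B (Fin.last (2*p)) := by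
      rw [hB]; rw [if_pos ⟨by show k0 % 2 = 0; omega, rfl⟩]
    have hbdz : ⁅b, d⁆ = B (Fin.last (2*p)) := by
      rw [hB]; rw [if_pos ⟨by show l0 % 2 = 0; omega, rfl⟩]
    have h0 : ⁅a - b, c + d⁆ = 0 := by
      rw [sub_lie, lie_add, lie_add, hacz, hbdz, had, hbc]
      abel
    have h1 := F1' p B hB φ hcy (a - b) (c + d) h0 t
    have h2 := F1' p B hB φ hcy a d had t
    have h3 := F1' p B hB φ hcy b c hbc t
    rw [map_sub, map_add, map_add] at h1
    simp only [LinearMap.sub_apply, LinearMap.add_apply, map_sub, map_add,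
      Finsupp.coe_add, Finsupp.coe_sub, Pi.add_apply, Pi.sub_apply] at h1
    rw [h2, h3] at h1
    -- h1 : (repr (φ a c) t + 0) - (0 + repr (φ b d) t) = 0
    linear_combination h1


include hsk

lemma zrow (j : Fin (2*p+1)) :
    φ (B (Fin.last (2*p))) (B j) = rho p (wOf p B φ) j • B (Fin.last (2*p)) := by
  rcases lt_or_ge j.val (2*p) with hj | hj
  · have hk0p : 2*(j.val/2) < 2*p+1 := by omega
    have hk1p : 2*(j.val/2)+1 < 2*p+1 := by omega
    have hzb : ⁅B ⟨2*(j.val/2), hk0p⟩, B ⟨2*(j.val/2)+1, hk1p⟩⁆ = B (Fin.last (2*p)) := by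
      rw [hB]; rw [if_pos ⟨show (2*(j.val/2)) % 2 = 0 by omega, rfl⟩]
    have h := hcy (B ⟨2*(j.val/2), hk0p⟩) (B ⟨2*(j.val/2)+1, hk1p⟩) (B j)
    rw [hzb] at h
    have h2 : φ (B (Fin.last (2*p))) (B j)
        = -⁅φ (B ⟨2*(j.val/2), hk0p⟩) (B ⟨2*(j.val/2)+1, hk1p⟩), B j⁆ :=
      eq_neg_of_add_eq_zero_left h
    rw [lie_basis p B hB, neg_smul, neg_neg] at h2
    rw [h2]
    congr 1
    rcases Nat.even_or_odd j.val with he | ho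
    · have he2 : j.val % 2 = 0 := Nat.even_iff.mp he
      rw [rho_even p _ he2 hj, rho_even p _ he2 hj]
      rw [wOf_eq p B φ ⟨j.val+1, by omega⟩ (2*(j.val/2))
        (show (2*(j.val/2)) = 2*(((j.val+1 : ℕ))/2) by omega) hk0p hk1p]
    · have ho2 : j.val % 2 = 1 := Nat.odd_iff.mp ho
      rw [rho_odd p _ ho2 hj, rho_odd p _ ho2 hj]
      rw [wOf_eq p B φ ⟨j.val-1, by omega⟩ (2*(j.val/2))
        (show (2*(j.val/2)) = 2*(((j.val-1 : ℕ))/2) by omega) hk0p hk1p]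
  · have hjl : j = Fin.last (2*p) := Fin.ext (by simp only [Fin.val_last]; have := j.isLt; omega)
    subst hjl
    rw [rho_last p _ (by simp), zero_smul]
    exact diag_zero φ hsk _

lemma key (i j : Fin (2*p+1)) (hij : i.val ≤ j.val) :
    cmat p B (aOf p B φ, wOf p B φ) i j = φ (B i) (B j) := by
  rcases lt_or_ge j.val (2*p) with hj2p | hj2p
  · rcases lt_or_eq_of_le hij with hlt | heq
    · -- i < j < 2p : coordinatewise
      have hi2p : i.val < 2*p := by omega
      refine B.ext_elem fun t => ?_
      induction t using Fin.lastCases with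
      | last =>
        rw [repr_cmat_last, psi_lt p _ hi2p hj2p hlt]
        exact rfl
      | cast k =>
        rw [repr_cmat_cast]
        by_cases hpair : i.val % 2 = 0 ∧ j.val = i.val + 1
        · have hbc1 : bc p K i j = 1 := by unfold bc; rw [if_pos hpair]
          have hjeq : j = ⟨i.val+1, by omega⟩ := Fin.ext hpair.2
          rw [hbc1, one_mul, hjeq]
          have hk := k.isLt
          exact (wOf_eq p B φ k (2*(k.val/2)) rfl (by omega) (by omega)).trans
            (pair_agree p B hB φ hcy (2*(k.val/2)) i.val (by omega) (by omega)
              hpair.1 (by omega) k)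
        · have hbc0 : bc p K i j = 0 := by unfold bc; rw [if_neg hpair, if_neg (by omega)]
          have hbr0 : ⁅B i, B j⁆ = 0 := by
            rw [hB]; rw [if_neg hpair, if_neg (by omega)]
          rw [hbc0, zero_mul, F1' p B hB φ hcy _ _ hbr0 k]
    · -- i = j
      have hii : i = j := Fin.ext heq
      subst hii
      rw [diag_zero φ hsk]
      unfold cmat
      rw [psi_diag, bc_diag, zero_smul, zero_smul, add_zero]
  · -- j = last
    have hjl : j = Fin.last (2*p) := Fin.ext (by simp only [Fin.val_last]; have := j.isLt; omega)
    subst hjl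
    rcases lt_or_ge i.val (2*p) with hi2p | hi2p
    · have hpsi : psi p (aOf p B φ, wOf p B φ) i (Fin.last (2*p))
          = -rho p (wOf p B φ) i := by
        unfold psi; rw [dif_pos hi2p, dif_neg (by simp)]
      unfold cmat
      rw [hpsi, bc_eq_zero p (Or.inr (by simp)), zero_smul, add_zero]
      rw [hsk, zrow p B hB φ hsk hcy i, neg_smul]
    · have hil : i = Fin.last (2*p) := Fin.ext (by simp only [Fin.val_last]; have := i.isLt; omega)
      subst hil
      unfold cmat
      rw [psi_last_left, rho_last p _ (by simp), zero_smul,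
        bc_eq_zero p (Or.inl (by simp)), zero_smul, add_zero]
      exact (diag_zero φ hsk _).symm

lemma T_surj : T p B (aOf p B φ, wOf p B φ) = φ := by
  refine B.ext fun i => B.ext fun j => ?_
  rw [T_apply_basis]
  rcases le_or_gt i.val j.val with h | h
  · exact key p B hB φ hsk hcy i j h
  · rw [cmat_skew p B _ i j, key p B hB φ hsk hcy j i (le_of_lt h)]
    exact (hsk (B i) (B j)).symm

end Surj
end HeisCo

/-- For the `(2p+1)`-dimensional Heisenberg Lie algebra, the space of
skew-symmetric bilinear cocycles `φ` with `φ([X,Y],Z) + [φ(X,Y),Z] = 0` has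
dimension `p(2p+1)`. -/
theorem heisenberg_cocycle_space_dim
    {K L : Type*} [Field K] [IsAlgClosed K] [CharZero K]
    [LieRing L] [LieAlgebra K L] (p : ℕ)
    (B : Module.Basis (Fin (2 * p + 1)) K L)
    (hB : ∀ i j : Fin (2 * p + 1),
      ⁅B i, B j⁆ =
        if i.val % 2 = 0 ∧ j.val = i.val + 1 then B (Fin.last (2 * p))
        else if j.val % 2 = 0 ∧ i.val = j.val + 1 then -B (Fin.last (2 * p))
        else 0) :
    Module.finrank K
      (Submodule.span K {φ : L →ₗ[K] L →ₗ[K] L |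
        (∀ X Y : L, φ X Y = - φ Y X) ∧
        (∀ X Y Z : L, φ ⁅X, Y⁆ Z + ⁅φ X Y, Z⁆ = 0)})
      = p * (2 * p + 1) := by
  classical
  have hset : {φ : L →ₗ[K] L →ₗ[K] L |
        (∀ X Y : L, φ X Y = - φ Y X) ∧
        (∀ X Y Z : L, φ ⁅X, Y⁆ Z + ⁅φ X Y, Z⁆ = 0)}
      = ↑(LinearMap.range (HeisCo.T p B)) := by
    ext φ
    simp only [Set.mem_setOf_eq, SetLike.mem_coe, LinearMap.mem_range]
    constructor
    · rintro ⟨hsk, hcy⟩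
      exact ⟨_, HeisCo.T_surj p B hB φ hsk hcy⟩
    · rintro ⟨m, rfl⟩
      exact ⟨HeisCo.T_skew p B hB m, HeisCo.T_cocycle p B hB m⟩
  rw [hset, Submodule.span_eq,
    ← LinearEquiv.finrank_eq (LinearEquiv.ofInjective _ (HeisCo.T_inj p B)),
    Module.finrank_prod, Module.finrank_pi, Module.finrank_pi, Fintype.card_sigma]
  simp only [Fintype.card_fin]
  rw [Fin.sum_univ_eq_sum_range (fun j => j) (2*p)]
  have h2 := Finset.sum_range_id_mul_two (2*p)
  have h3 : 2*p*(2*p-1) + 2*p = 4*(p*p) := by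
    cases p with
    | zero => simp
    | succ q =>
      have h5 : 2*(q+1)-1 = 2*q+1 := by omega
      rw [h5]; ring
  have h4 : p * (2*p+1) = 2*(p*p) + p := by ring
  obtain ⟨q, hq⟩ : ∃ q, p*p = q := ⟨_, rfl⟩
  rw [h4, hq]
  rw [hq] at h3
  omega
end

section
/- Let k_{2p+1} be the (2p+1)-dimensional two-step nilpotent Lie algebra with basis X1,...,X_{2p+1} and nonzero brackets [X1, X_{2i}] = X_{2i+1} for 1 ≤ i ≤ p. Then any (2p+1)-dimensional two-step nilpotent Lie algebra with characteristic sequence (2,...,2,1) (with 2 appearing p times) admits a basis in which its brackets are [X1, X_{2i}] = X_{2i+1} for 1 ≤ i ≤ p and [X_{2i}, X_{2j}] = Σ_{k=1}^p a_{2i,2j}^{2k+1} X_{2k+1} for 1 ≤ i < j ≤ p; equivalently, it is isomorphic to a linear deformation μ0 + tφ of k_{2p+1} for some t and some cocycle φ supported on pairs (X_{2i}, X_{2j}) with values in span{X3, X5, ..., X_{2p+1}}. -/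
set_option maxHeartbeats 1600000

/-- Any `(2p+1)`-dimensional two-step nilpotent Lie algebra with characteristic
sequence `(2,…,2,1)` (i.e. some `ad X` has rank `p`, the maximal possible value)
admits a basis `X_1, …, X_{2p+1}` in which the brackets are
`[X_1, X_{2i}] = X_{2i+1}` and `[X_{2i}, X_{2j}] ∈ span{X_3, X_5, …, X_{2p+1}}`,
with the `X_{2i+1}` central; equivalently, it is a linear deformation of the Lie
algebra `k_{2p+1}`. -/
theorem two_step_char_seq_max_odd_normal_form
    {K L : Type*} [Field K] [IsAlgClosed K] [CharZero K]
    [LieRing L] [LieAlgebra K L] [FiniteDimensional K L] (p : ℕ)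
    (hdim : Module.finrank K L = 2 * p + 1)
    (h2 : ∀ X Y Z : L, ⁅⁅X, Y⁆, Z⁆ = 0)
    (hcs : ∃ X : L, Module.finrank K (LinearMap.range (LieAlgebra.ad K L X)) = p) :
    ∃ B : Module.Basis (Fin (2 * p + 1)) K L,
      (∀ i : Fin p,
        ⁅B ⟨0, by omega⟩, B ⟨2 * i.val + 1, by have := i.isLt; omega⟩⁆
          = B ⟨2 * i.val + 2, by have := i.isLt; omega⟩) ∧
      (∀ i j : Fin p,
        ⁅B ⟨2 * i.val + 1, by have := i.isLt; omega⟩,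
          B ⟨2 * j.val + 1, by have := j.isLt; omega⟩⁆
          ∈ Submodule.span K
            (Set.range (fun k : Fin p =>
              B ⟨2 * k.val + 2, by have := k.isLt; omega⟩))) ∧
      (∀ i : Fin p, ∀ Y : L,
        ⁅B ⟨2 * i.val + 2, by have := i.isLt; omega⟩, Y⁆ = 0) := by
  rcases Nat.eq_zero_or_pos p with hp | hp
  · subst hp
    exact ⟨(Module.finBasis K L).reindex (finCongr hdim), fun i => i.elim0,
      fun i => i.elim0, fun i => i.elim0⟩
  obtain ⟨X, hX⟩ := hcs
  set A : L →ₗ[K] L := LieAlgebra.ad K L X with hA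
  set R : Submodule K L := LinearMap.range A with hRdef
  -- elements of R are central
  have hRcent : ∀ r ∈ R, ∀ u : L, ⁅r, u⁆ = 0 := by
    rintro r ⟨w, rfl⟩ u
    simpa [hA, LieAlgebra.ad_apply] using h2 X w u
  have hXnR : X ∉ R := by
    intro hXR
    have hA0 : A = 0 := by
      ext u
      simpa [hA, LieAlgebra.ad_apply] using hRcent X hXR u
    rw [hRdef, hA0] at hX
    rw [LinearMap.range_zero, finrank_bot] at hX
    omega
  -- a basis of R and preimages
  have hZb : Module.Basis (Fin p) K R := (Module.finBasis K R).reindex (finCongr hX)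
  set Z : Fin p → R := ⇑hZb with hZdef
  have hZmem : ∀ i, (Z i : L) ∈ R := fun i => (Z i).2
  have hYex : ∀ i : Fin p, ∃ y : L, A y = (Z i : L) := fun i => (Z i).2
  choose Y hY using hYex
  -- R as a span
  have hRspan : R = Submodule.span K (Set.range fun i : Fin p => (Z i : L)) := by
    have := congrArg (Submodule.map R.subtype) hZb.span_eq
    rw [Submodule.map_span, Submodule.map_subtype_top, ← Set.range_comp] at this
    exact this.symm
  -- kernel of A
  have hkerrank : Module.finrank K (LinearMap.ker A) = p + 1 := by
    have h := LinearMap.finrank_range_add_finrank_ker A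
    rw [hdim] at h
    rw [hRdef] at hX
    omega
  have hker : Submodule.span K {X} ⊔ R = LinearMap.ker A := by
    have hle : Submodule.span K {X} ⊔ R ≤ LinearMap.ker A := by
      refine sup_le ?_ ?_
      · rw [Submodule.span_singleton_le_iff_mem, LinearMap.mem_ker]
        simp [hA, LieAlgebra.ad_apply]
      · rintro r hr
        rw [LinearMap.mem_ker]
        have := hRcent r hr X
        simp only [hA, LieAlgebra.ad_apply]
        rw [← lie_skew, this, neg_zero]
    refine Submodule.eq_of_le_of_finrank_le hle ?_
    have hinf : Submodule.span K {X} ⊓ R = ⊥ := by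
      rw [Submodule.eq_bot_iff]
      intro x hx
      obtain ⟨hx1, hx2⟩ := Submodule.mem_inf.mp hx
      rw [Submodule.mem_span_singleton] at hx1
      obtain ⟨c, rfl⟩ := hx1
      by_contra hne
      have hc : c ≠ 0 := by rintro rfl; simp at hne
      exact hXnR (by simpa [smul_smul, inv_mul_cancel₀ hc] using R.smul_mem c⁻¹ hx2)
    have hsum := Submodule.finrank_sup_add_finrank_inf_eq (Submodule.span K {X}) R
    rw [hinf] at hsum
    have hX1 : Module.finrank K (Submodule.span K {X}) = 1 := by
      rw [finrank_span_singleton]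
      intro h0
      apply hXnR
      rw [h0]; exact R.zero_mem
    rw [hRdef] at hX
    simp [hX1, hX, hkerrank] at hsum ⊢
    omega
  -- the candidate basis vectors
  set v : Fin (2 * p + 1) → L := fun n =>
    if h0 : n.val = 0 then X
    else if h1 : n.val % 2 = 1 then Y ⟨n.val / 2, by have := n.isLt; omega⟩
    else (Z ⟨n.val / 2 - 1, by have := n.isLt; omega⟩ : L) with hv
  have hv0 : v ⟨0, by omega⟩ = X := by simp [hv]
  have hvY : ∀ i : Fin p, v ⟨2 * i.val + 1, by have := i.isLt; omega⟩ = Y i := by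
    intro i
    have e : (⟨(2 * i.val + 1) / 2, by have := i.isLt; omega⟩ : Fin p) = i :=
      Fin.ext (by simp only [Fin.val_mk]; omega)
    simp only [hv]
    rw [dif_neg (by omega), dif_pos (by omega)]
    exact congrArg Y e
  have hvZ : ∀ i : Fin p, v ⟨2 * i.val + 2, by have := i.isLt; omega⟩ = (Z i : L) := by
    intro i
    have e : (⟨(2 * i.val + 2) / 2 - 1, by have := i.isLt; omega⟩ : Fin p) = i :=
      Fin.ext (by simp only [Fin.val_mk]; omega)
    simp only [hv]
    rw [dif_neg (by omega), dif_neg (by omega)]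
    exact congrArg (fun k => (Z k : L)) e
  set S : Submodule K L := Submodule.span K (Set.range v) with hSdef
  have hXS : X ∈ S := hv0 ▸ Submodule.subset_span (Set.mem_range_self _)
  have hZS : ∀ i : Fin p, (Z i : L) ∈ S := fun i =>
    hvZ i ▸ Submodule.subset_span (Set.mem_range_self _)
  have hYS : ∀ i : Fin p, Y i ∈ S := fun i =>
    hvY i ▸ Submodule.subset_span (Set.mem_range_self _)
  have hRS : R ≤ S := by
    rw [hRspan, Submodule.span_le]
    rintro _ ⟨i, rfl⟩
    exact hZS i
  have hkerS : LinearMap.ker A ≤ S := by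
    rw [← hker]
    exact sup_le ((Submodule.span_singleton_le_iff_mem _ _).2 hXS) hRS
  -- spanning
  have hspan : ⊤ ≤ S := by
    intro w _
    have hw : A w ∈ R := ⟨w, rfl⟩
    have hmap : R ≤ Submodule.map A (Submodule.span K (Set.range Y)) := by
      rw [Submodule.map_span, ← Set.range_comp, hRspan]
      refine Submodule.span_mono ?_
      rintro _ ⟨i, rfl⟩
      exact ⟨i, hY i⟩
    obtain ⟨t, htT, htw⟩ := hmap hw
    have htS : t ∈ S := by
      refine Submodule.span_le.mpr ?_ htT
      rintro _ ⟨i, rfl⟩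
      exact hYS i
    have : w - t ∈ LinearMap.ker A := by
      rw [LinearMap.mem_ker, map_sub, htw, sub_self]
    have := hkerS this
    have := S.add_mem this htS
    simpa using this
  have hcard : Fintype.card (Fin (2 * p + 1)) = Module.finrank K L := by
    simp [hdim]
  refine ⟨basisOfTopLeSpanOfCardEqFinrank v hspan hcard, ?_, ?_, ?_⟩
  · intro i
    rw [show ⇑(basisOfTopLeSpanOfCardEqFinrank v hspan hcard) = v from
      coe_basisOfTopLeSpanOfCardEqFinrank v hspan hcard]
    rw [hv0, hvY i, hvZ i, ← hY i]
    simp [hA, LieAlgebra.ad_apply]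
  · intro i j
    rw [show ⇑(basisOfTopLeSpanOfCardEqFinrank v hspan hcard) = v from
      coe_basisOfTopLeSpanOfCardEqFinrank v hspan hcard]
    have hfun : (fun k : Fin p => v ⟨2 * k.val + 2, by have := k.isLt; omega⟩)
        = fun k : Fin p => (Z k : L) := funext fun k => hvZ k
    rw [hvY i, hvY j, hfun, ← hRspan]
    -- show ⁅Y i, Y j⁆ ∈ R
    have hbker : ⁅Y i, Y j⁆ ∈ LinearMap.ker A := by
      rw [LinearMap.mem_ker]
      simp only [hA, LieAlgebra.ad_apply]
      rw [← lie_skew, h2, neg_zero]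
    rw [← hker, Submodule.mem_sup] at hbker
    obtain ⟨y, hy, z, hz, hsum⟩ := hbker
    rw [Submodule.mem_span_singleton] at hy
    obtain ⟨c, rfl⟩ := hy
    -- show c = 0
    have hcent : ∀ u : L, ⁅⁅Y i, Y j⁆, u⁆ = 0 := fun u => h2 _ _ _
    have hzc : ∀ u : L, ⁅z, u⁆ = 0 := hRcent z hz
    have hcXc : ∀ u : L, c • ⁅X, u⁆ = 0 := by
      intro u
      have := hcent u
      rw [← hsum] at this
      rw [add_lie, hzc u] at this
      simpa [smul_lie] using this
    have hc0 : c = 0 := by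
      by_contra hc
      have hZ00 : (Z ⟨0, hp⟩ : L) ≠ 0 := by
        intro h0
        have := hZb.ne_zero ⟨0, hp⟩
        exact this (Subtype.ext h0)
      obtain ⟨u, hu⟩ : ∃ u, A u = (Z ⟨0, hp⟩ : L) := ⟨Y ⟨0, hp⟩, hY ⟨0, hp⟩⟩
      have hzz : c • (Z ⟨0, hp⟩ : L) = 0 := by
        rw [← hu]
        simpa [hA, LieAlgebra.ad_apply] using hcXc u
      rcases smul_eq_zero.mp hzz with h | h
      · exact hc h
      · exact hZ00 h
    rw [hc0, zero_smul, zero_add] at hsum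
    rw [← hsum]
    exact hz
  · intro i YY
    rw [show ⇑(basisOfTopLeSpanOfCardEqFinrank v hspan hcard) = v from
      coe_basisOfTopLeSpanOfCardEqFinrank v hspan hcard]
    rw [hvZ i]
    exact hRcent _ (hZmem i) YY
end
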